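/- For all positive integers m and n, the cardinality of the set Γ_n^{(m)} of m-Dyck words of length n equals the higher Catalan number (1/(mn+1))·C(mn+n, n). -/

import Mathlib

namespace Stmt5Aux

/-- Sequences of length `n+1` with first value `≤ c` and increments `≤ m`. -/
def Sset (m n c : ℕ) : Type :=
  {g : Fin (n+1) → ℕ // g 0 ≤ c ∧ ∀ (i : ℕ) (h : i + 1 < n + 1),
      g ⟨i+1, h⟩ ≤ g ⟨i, Nat.lt_of_succ_lt h⟩ + m}

def equivZero (m c : ℕ) : Sset m 0 c ≃ Fin (c+1) where
  toFun g := ⟨g.1 0, Nat.lt_succ_of_le g.2.1⟩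
  invFun j := ⟨fun _ => j.1, ⟨Nat.lt_succ_iff.mp j.2, fun i h => by omega⟩⟩
  left_inv g := by
    apply Subtype.ext; funext i
    have : i = 0 := by omega
    simp [this]
  right_inv j := rfl

def equivSucc (m k c : ℕ) :
    Sset m (k+1) c ≃ (j : Fin (c+1)) × Sset m k (j.1 + m) where
  toFun g := ⟨⟨g.1 0, Nat.lt_succ_of_le g.2.1⟩,
    ⟨Fin.tail g.1, by
      constructor
      · have := g.2.2 0 (by omega)
        simpa [Fin.tail] using this
      · intro i h
        have h2 : i + 1 + 1 < k + 1 + 1 := by omega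
        have := g.2.2 (i+1) h2
        simpa [Fin.tail, Fin.succ_mk] using this⟩⟩
  invFun p := ⟨Fin.cons p.1.1 p.2.1, by
    constructor
    · simpa using Nat.lt_succ_iff.mp p.1.2
    · intro i h
      match i with
      | 0 =>
        have h0 : (⟨1, h⟩ : Fin (k+2)) = Fin.succ 0 := rfl
        have h1 : (⟨0, Nat.lt_of_succ_lt h⟩ : Fin (k+2)) = 0 := rfl
        rw [h0, h1, Fin.cons_succ, Fin.cons_zero]
        exact p.2.2.1
      | Nat.succ i =>
        have h0 : (⟨i+1+1, h⟩ : Fin (k+2)) = Fin.succ ⟨i+1, by omega⟩ := rfl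
        have h1 : (⟨i+1, Nat.lt_of_succ_lt h⟩ : Fin (k+2)) = Fin.succ ⟨i, by omega⟩ := rfl
        rw [h0, h1, Fin.cons_succ, Fin.cons_succ]
        exact p.2.2.2 i (by omega)⟩
  left_inv g := by
    apply Subtype.ext
    exact Fin.cons_self_tail g.1
  right_inv p := by
    obtain ⟨⟨j, hj⟩, δ, hδ⟩ := p
    refine Sigma.ext rfl (heq_of_eq (Subtype.ext ?_))
    funext i
    simp [Fin.tail]

lemma finiteS (m : ℕ) : ∀ n c, Finite (Sset m n c) := by
  intro n
  induction n with
  | zero => intro c; exact Finite.of_equiv _ (equivZero m c).symm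
  | succ k ih =>
    intro c
    haveI : ∀ j : Fin (c+1), Finite (Sset m k (j.1 + m)) := fun j => ih _
    exact Finite.of_equiv _ (equivSucc m k c).symm

def hcount (m : ℕ) : ℕ → ℕ → ℕ
  | 0, c => c + 1
  | (k+1), c => ∑ j ∈ Finset.range (c+1), hcount m k (j + m)

lemma card_S (m : ℕ) : ∀ n c, Nat.card (Sset m n c) = hcount m n c := by
  intro n
  induction n with
  | zero =>
    intro c
    rw [Nat.card_congr (equivZero m c)]
    simp [hcount]
  | succ k ih =>
    intro c
    rw [Nat.card_congr (equivSucc m k c)]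
    haveI : ∀ j : Fin (c+1), Finite (Sset m k (j.1 + m)) := fun j => finiteS m k _
    haveI inst : ∀ j : Fin (c+1), Fintype (Sset m k (j.1 + m)) := fun j => Fintype.ofFinite _
    rw [Nat.card_eq_fintype_card, Fintype.card_sigma]
    show (∑ j : Fin (c+1), Fintype.card (Sset m k (j.1 + m))) = hcount m (k+1) c
    have : ∀ j : Fin (c+1), Fintype.card (Sset m k (j.1 + m)) = hcount m k (j.1 + m) := by
      intro j; rw [← Nat.card_eq_fintype_card, ih]
    rw [Finset.sum_congr rfl (fun j _ => this j)]
    rw [show hcount m (k+1) c = ∑ j ∈ Finset.range (c+1), hcount m k (j + m) from rfl]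
    exact Fin.sum_univ_eq_sum_range (fun j => hcount m k (j + m)) (c+1)

end Stmt5Aux

namespace Stmt5Aux

lemma sum_id (m k c : ℕ) :
    (k+2) * ∑ j ∈ Finset.range (c+1), (j+m+1) * Nat.choose ((m+1)*(k+1)+m+j) k
      = (k+1)*(c+1) * Nat.choose ((m+1)*(k+1)+m+c+1) (k+1) := by
  induction c with
  | zero =>
    simp only [Finset.sum_range_one, Nat.add_zero, Nat.zero_add, Nat.mul_one]
    have h := Nat.add_one_mul_choose_eq ((m+1)*(k+1)+m) k
    zify at h ⊢
    linear_combination h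
  | succ c ih =>
    rw [Finset.sum_range_succ, Nat.mul_add, ih]
    have e1 : (m+1)*(k+1)+m+(c+1) = (m+1)*(k+1)+m+c+1 := by ring
    rw [e1]
    set N := (m+1)*(k+1)+m+c+1 with hN
    have hPascal : Nat.choose (N+1) (k+1) = Nat.choose N k + Nat.choose N (k+1) :=
      Nat.choose_succ_succ N k
    rw [hPascal]
    have hsub : N - k = m*k+2*m+c+2 := by
      have : N = m*k+2*m+c+2+k := by rw [hN]; ring
      omega
    have habs : Nat.choose N (k+1) * (k+1) = Nat.choose N k * (m*k+2*m+c+2) := by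
      rw [Nat.choose_succ_right_eq, hsub]
    zify at habs ⊢
    linear_combination (-1 : ℤ) * habs

lemma key (m : ℕ) : ∀ k c, (k+1) * hcount m k c = (c+1) * Nat.choose ((m+1)*(k+1)+c) k := by
  intro k
  induction k with
  | zero => intro c; simp [hcount]
  | succ k ih =>
    intro c
    apply Nat.eq_of_mul_eq_mul_left (show 0 < k+1 by omega)
    calc (k+1) * ((k+1+1) * hcount m (k+1) c)
        = (k+2) * ∑ j ∈ Finset.range (c+1), (k+1) * hcount m k (j+m) := by
          rw [show hcount m (k+1) c = ∑ j ∈ Finset.range (c+1), hcount m k (j+m) from rfl,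
            Finset.mul_sum, Finset.mul_sum, Finset.mul_sum]
          exact Finset.sum_congr rfl fun j _ => by ring
      _ = (k+2) * ∑ j ∈ Finset.range (c+1), (j+m+1) * Nat.choose ((m+1)*(k+1)+m+j) k := by
          congr 1
          refine Finset.sum_congr rfl fun j _ => ?_
          rw [ih (j+m)]
          rw [show (m+1)*(k+1)+(j+m) = (m+1)*(k+1)+m+j from by ring]
      _ = (k+1)*(c+1) * Nat.choose ((m+1)*(k+1)+m+c+1) (k+1) := sum_id m k c
      _ = (k+1) * ((c+1) * Nat.choose ((m+1)*(k+1+1)+c) (k+1)) := by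
          rw [show (m+1)*(k+1)+m+c+1 = (m+1)*(k+1+1)+c from by ring]; ring

end Stmt5Aux

/-- For `m, n ≥ 1`, the number of `m`-Dyck words of length `n` (sequences
`γ : Fin n → ℕ` with `γ 0 = 0` and `γ (i+1) ≤ γ i + m`) equals
`(1/(mn+1))·C(mn+n, n)`. -/
theorem stmt5 (m n : ℕ) (hm : 0 < m) (hn : 0 < n) :
    (Nat.card {g : Fin n → ℕ // g ⟨0, hn⟩ = 0 ∧
        ∀ (i : ℕ) (h : i + 1 < n), g ⟨i + 1, h⟩ ≤ g ⟨i, Nat.lt_of_succ_lt h⟩ + m} : ℚ)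
    = (1 / (m * n + 1)) * Nat.choose (m * n + n) n := by
  rcases n with _ | _ | k
  · exact absurd hn (lt_irrefl 0)
  · -- n = 1
    have hcard : Nat.card {g : Fin 1 → ℕ // g ⟨0, hn⟩ = 0 ∧
        ∀ (i : ℕ) (h : i + 1 < 1), g ⟨i + 1, h⟩ ≤ g ⟨i, Nat.lt_of_succ_lt h⟩ + m} = 1 := by
      rw [Nat.card_eq_one_iff_unique]
      constructor
      · constructor
        intro a b
        apply Subtype.ext
        funext i
        have hi : i = ⟨0, hn⟩ := by omega
        rw [hi, a.2.1, b.2.1]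
      · exact ⟨⟨fun _ => 0, rfl, fun i h => by omega⟩⟩
    rw [hcard]
    have h1 : Nat.choose (m * 1 + 1) 1 = m * 1 + 1 := Nat.choose_one_right _
    rw [h1]
    have hD : (m : ℚ) * 1 + 1 ≠ 0 := by positivity
    push_cast
    field_simp
  · -- n = k + 2
    set T := {g : Fin (k+2) → ℕ // g ⟨0, hn⟩ = 0 ∧
        ∀ (i : ℕ) (h : i + 1 < k + 2), g ⟨i + 1, h⟩ ≤ g ⟨i, Nat.lt_of_succ_lt h⟩ + m} with hT
    have hequiv : T ≃ Stmt5Aux.Sset m (k+1) 0 := by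
      apply Equiv.subtypeEquivRight
      intro g
      have e : (⟨0, hn⟩ : Fin (k+2)) = 0 := by ext; simp
      rw [e]
      constructor
      · rintro ⟨h1, h2⟩; exact ⟨le_of_eq h1, h2⟩
      · rintro ⟨h1, h2⟩; exact ⟨Nat.le_zero.mp h1, h2⟩
    have hcard : Nat.card T = Stmt5Aux.hcount m (k+1) 0 := by
      rw [Nat.card_congr hequiv, Stmt5Aux.card_S]
    have hkey := Stmt5Aux.key m (k+1) 0
    -- (k+2) * hcount m (k+1) 0 = 1 * choose ((m+1)*(k+2)+0) (k+1)
    have habs := Nat.choose_succ_right_eq ((m+1)*(k+2)) (k+1)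
    -- choose P (k+2) * (k+2) = choose P (k+1) * (P - (k+1))
    have hsub : (m+1)*(k+2) - (k+1) = m*(k+2)+1 := by
      have : (m+1)*(k+2) = m*(k+2)+1 + (k+1) := by ring
      omega
    rw [hsub] at habs
    rw [hcard]
    have e2 : m * (k+2) + (k+2) = (m+1)*(k+2) := by ring
    rw [e2]
    have e3 : (m+1)*(k+1+1)+0 = (m+1)*(k+2) := by ring
    rw [e3] at hkey
    norm_num at hkey habs
    have hq : ((k:ℚ)+2) * (Stmt5Aux.hcount m (k+1) 0 : ℚ)
        = (Nat.choose ((m+1)*(k+2)) (k+1) : ℚ) := by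
      exact_mod_cast hkey
    have ha : (Nat.choose ((m+1)*(k+2)) (k+2) : ℚ) * ((k:ℚ)+2)
        = (Nat.choose ((m+1)*(k+2)) (k+1) : ℚ) * ((m:ℚ)*((k:ℚ)+2)+1) := by
      exact_mod_cast habs
    have hD : (m:ℚ)*((k:ℚ)+2)+1 ≠ 0 := by positivity
    have hk2 : ((k:ℚ)+2) ≠ 0 := by positivity
    push_cast
    rw [div_mul_eq_mul_div, eq_div_iff (by positivity)]
    apply mul_left_cancel₀ hk2
    push_cast at hq ha ⊢
    linear_combination ((m:ℚ)*((k:ℚ)+2)+1) * hq - ha
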